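/- Let m, x, y, c be natural numbers with y < x < m. Set k = 2m + c, d = (2^m − 2^x − 2^y)·2^{m+c−1} and n = (2^m − 2^x)(2^m − 2^y)·2^c. Then Σ_{i=0}^{k−1} ⌈(d+1)/2^i⌉ = n − 2^{x+y+c} + m + c + y + 1. Consequently, Σ_{i=0}^{k−1} ⌈(d+1)/2^i⌉ ≥ n + 1 if and only if 2^{x+y+c} ≤ m + c + y. (By the Griesmer bound this proves that the four-weight code C_D^{(2)} with parameters [n, k, d] is distance-optimal whenever 2^{|X|+|Y|+|Z|+|W|} ≤ m + |Z| + |W| + min{|X|,|Y|}.) -/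

import Mathlib

open Finset

lemma griesmer_geo (K e : ℕ) (h : K ≤ e) :
    ∑ i ∈ Finset.range K, (2:ℤ)^(e-1-i) = 2^e - 2^(e-K) := by
  induction K with
  | zero => simp
  | succ K ih =>
    have hK : K ≤ e := Nat.le_of_succ_le h
    rw [Finset.sum_range_succ, ih hK]
    have h1 : e - K = (e - (K+1)) + 1 := by omega
    have h2 : e - 1 - K = e - (K+1) := by omega
    rw [h1, h2, pow_succ]
    ring

lemma gdiv3 (p P Q R : ℕ) (hp : 0 < p) : (p*P - p*Q - p*R)/p = P - Q - R := by
  rw [← Nat.mul_sub, ← Nat.mul_sub, Nat.mul_div_cancel_left _ hp]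

lemma gdiv2 (p P Q r : ℕ) (hr : 0 < r) (hrp : r < p) (hQP : Q + 1 ≤ P) :
    (p*P - p*Q - r)/p = P - Q - 1 := by
  have hp : 0 < p := lt_trans hr hrp
  have h3 : p*Q + p ≤ p*P := by
    calc p*Q + p = p*(Q+1) := by ring
    _ ≤ p*P := Nat.mul_le_mul_left _ hQP
  have h2 : p*(P-Q-1) = p*P - p*Q - p := by
    rw [Nat.mul_sub, Nat.mul_sub, Nat.mul_one]
  have key : p*P - p*Q - r = p*(P-Q-1) + (p-r) := by
    rw [h2]
    generalize p*P = a at *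
    generalize p*Q = b at *
    omega
  rw [key, Nat.mul_add_div hp, Nat.div_eq_of_lt (by omega), add_zero]

lemma gdiv1 (p P s : ℕ) (hs : 0 < s) (hsp : s ≤ p) (hP : 1 ≤ P) :
    (p*P - s)/p = P - 1 := by
  have hp : 0 < p := lt_of_lt_of_le hs hsp
  have h3 : p ≤ p*P := by calc p = p*1 := by ring
                            _ ≤ p*P := Nat.mul_le_mul_left _ hP
  have h2 : p*(P-1) = p*P - p := by rw [Nat.mul_sub, Nat.mul_one]
  have key : p*P - s = p*(P-1) + (p-s) := by
    rw [h2]; generalize p*P = a at *; omega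
  rw [key, Nat.mul_add_div hp]
  rcases Nat.eq_or_lt_of_le hsp with h | h
  · subst h; simp
  · rw [Nat.div_eq_of_lt (by omega), add_zero]

lemma gcast3 (a b c' : ℕ) (h1 : b < a) (h2 : c' ≤ b) :
    ((2^a - 2^b - 2^c' : ℕ) : ℤ) = 2^a - 2^b - 2^c' := by
  have hsum : (2:ℕ)^b + 2^c' ≤ 2^a := by
    calc (2:ℕ)^b + 2^c' ≤ 2^b + 2^b :=
          Nat.add_le_add_left (Nat.pow_le_pow_right (by norm_num) h2) _
    _ = 2^(b+1) := by ring
    _ ≤ 2^a := Nat.pow_le_pow_right (by norm_num) h1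
  rw [Nat.sub_sub, Nat.cast_sub hsum]
  push_cast
  ring

lemma griesmer_T (m x y : ℕ) (hyx : y < x) (hxm : x < m) :
    (∑ i ∈ Finset.range m, (((2^m - 2^x - 2^y) / 2^(i+1) : ℕ) : ℤ))
      = ((2^m - 2^x - 2^y : ℕ) : ℤ) + y + 1 - m := by
  have hym : y < m := lt_trans hyx hxm
  -- split
  rw [← Finset.sum_range_add_sum_Ico _ hxm.le, ← Finset.sum_range_add_sum_Ico _ hyx.le]
  -- piece 1
  have hterm1 : ∀ i ∈ Finset.range y, (((2^m - 2^x - 2^y) / 2^(i+1) : ℕ) : ℤ)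
      = (2:ℤ)^(m-1-i) - 2^(x-1-i) - 2^(y-1-i) := by
    intro i hi
    simp only [Finset.mem_range] at hi
    have em : (2:ℕ)^m = 2^(i+1) * 2^(m-1-i) := by rw [← pow_add]; congr 1; omega
    have ex : (2:ℕ)^x = 2^(i+1) * 2^(x-1-i) := by rw [← pow_add]; congr 1; omega
    have ey : (2:ℕ)^y = 2^(i+1) * 2^(y-1-i) := by rw [← pow_add]; congr 1; omega
    rw [em, ex, ey, gdiv3 _ _ _ _ (by positivity),
      gcast3 _ _ _ (by omega) (by omega)]
  have p1 : (∑ i ∈ Finset.range y, (((2^m - 2^x - 2^y) / 2^(i+1) : ℕ) : ℤ))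
      = (2^m - 2^(m-y)) - (2^x - 2^(x-y)) - (2^y - 2^(y-y)) := by
    rw [Finset.sum_congr rfl hterm1, Finset.sum_sub_distrib,
      Finset.sum_sub_distrib, griesmer_geo y m hym.le, griesmer_geo y x hyx.le,
      griesmer_geo y y le_rfl]
  have hterm2 : ∀ i ∈ Finset.Ico y x, (((2^m - 2^x - 2^y) / 2^(i+1) : ℕ) : ℤ)
      = (2:ℤ)^(m-1-i) - 2^(x-1-i) - 2^0 := by
    intro i hi
    simp only [Finset.mem_Ico] at hi
    have em : (2:ℕ)^m = 2^(i+1) * 2^(m-1-i) := by rw [← pow_add]; congr 1; omega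
    have ex : (2:ℕ)^x = 2^(i+1) * 2^(x-1-i) := by rw [← pow_add]; congr 1; omega
    rw [em, ex, gdiv2 _ _ _ _ (by positivity)
      (Nat.pow_lt_pow_right (by norm_num) (by omega))
      (Nat.pow_lt_pow_right (by norm_num) (by omega))]
    rw [show (2^(m-1-i) - 2^(x-1-i) - 1 : ℕ) = (2^(m-1-i) - 2^(x-1-i) - 2^0 : ℕ) by norm_num,
      gcast3 _ _ _ (by omega) (Nat.zero_le _)]
  have hterm3 : ∀ i ∈ Finset.Ico x m, (((2^m - 2^x - 2^y) / 2^(i+1) : ℕ) : ℤ)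
      = (2:ℤ)^(m-1-i) - 2^0 := by
    intro i hi
    simp only [Finset.mem_Ico] at hi
    have em : (2:ℕ)^m = 2^(i+1) * 2^(m-1-i) := by rw [← pow_add]; congr 1; omega
    have hsp : (2:ℕ)^x + 2^y ≤ 2^(i+1) := by
      calc (2:ℕ)^x + 2^y ≤ 2^x + 2^x :=
            Nat.add_le_add_left (Nat.pow_le_pow_right (by norm_num) hyx.le) _
      _ = 2^(x+1) := by ring
      _ ≤ 2^(i+1) := Nat.pow_le_pow_right (by norm_num) (by omega)
    rw [Nat.sub_sub, em, gdiv1 _ _ _ (by positivity) hsp Nat.one_le_two_pow,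
      Nat.cast_sub Nat.one_le_two_pow]
    push_cast
    ring
  have p2 : (∑ i ∈ Finset.Ico y x, (((2^m - 2^x - 2^y) / 2^(i+1) : ℕ) : ℤ))
      = (2^(m-y) - 2^(m-x)) - (2^(x-y) - 2^0) - (x-y : ℕ) := by
    rw [Finset.sum_congr rfl hterm2, Finset.sum_sub_distrib, Finset.sum_sub_distrib,
      Finset.sum_Ico_eq_sum_range, Finset.sum_Ico_eq_sum_range, Finset.sum_Ico_eq_sum_range]
    have e1 : ∀ i ∈ Finset.range (x-y), (2:ℤ)^(m-1-(y+i)) = 2^((m-y)-1-i) := by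
      intro i hi; congr 1; omega
    have e2 : ∀ i ∈ Finset.range (x-y), (2:ℤ)^(x-1-(y+i)) = 2^((x-y)-1-i) := by
      intro i hi; congr 1; omega
    rw [Finset.sum_congr rfl e1, Finset.sum_congr rfl e2,
      griesmer_geo (x-y) (m-y) (by omega), griesmer_geo (x-y) (x-y) le_rfl]
    have e3 : (m-y)-(x-y) = m-x := by omega
    have e4 : (x-y)-(x-y) = 0 := by omega
    rw [e3, e4]
    simp
  have p3 : (∑ i ∈ Finset.Ico x m, (((2^m - 2^x - 2^y) / 2^(i+1) : ℕ) : ℤ))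
      = (2^(m-x) - 2^0) - (m-x : ℕ) := by
    rw [Finset.sum_congr rfl hterm3, Finset.sum_sub_distrib,
      Finset.sum_Ico_eq_sum_range, Finset.sum_Ico_eq_sum_range]
    have e1 : ∀ i ∈ Finset.range (m-x), (2:ℤ)^(m-1-(x+i)) = 2^((m-x)-1-i) := by
      intro i hi; congr 1; omega
    rw [Finset.sum_congr rfl e1, griesmer_geo (m-x) (m-x) le_rfl]
    have e4 : (m-x)-(m-x) = 0 := by omega
    rw [e4]
    simp
  rw [p1, p2, p3, gcast3 m x y hxm hyx.le]
  rw [Nat.cast_sub hyx.le, Nat.cast_sub hxm.le, Nat.sub_self, pow_zero]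
  ring

lemma griesmer_ceil (a i : ℕ) : ⌈((a:ℚ)+1)/2^i⌉ = (a/2^i : ℕ) + 1 := by
  have h2 : (0:ℚ) < 2^i := by positivity
  have key : ∀ q : ℕ, q * 2^i ≤ a → a < (q+1)*2^i →
      ⌈((a:ℚ)+1)/2^i⌉ = (q:ℤ) + 1 := by
    intro q h1 h3
    rw [Int.ceil_eq_iff]
    constructor
    · rw [lt_div_iff₀ h2]
      have : ((q:ℚ)) * 2^i ≤ (a:ℚ) := by exact_mod_cast h1
      push_cast
      linarith
    · rw [div_le_iff₀ h2]
      have h4 : a + 1 ≤ (q+1)*2^i := h3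
      have : ((a:ℚ)) + 1 ≤ ((q:ℚ)+1) * 2^i := by exact_mod_cast h4
      push_cast
      linarith
  exact key (a / 2^i) (Nat.div_mul_le_self a (2^i))
    ((Nat.div_lt_iff_lt_mul (Nat.pow_pos (by norm_num : 0 < 2))).mp (Nat.lt_succ_self _))


/-- For `k = 2m + c`, `d = (2^m − 2^x − 2^y)·2^{m+c−1}` and
`n = (2^m − 2^x)(2^m − 2^y)·2^c`, the Griesmer sum of `d + 1` is
`n − 2^{x+y+c} + m + c + y + 1`; hence it is `≥ n + 1` iff
`2^{x+y+c} ≤ m + c + y`. -/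
theorem stmt13 (m x y c : ℕ) (hyx : y < x) (hxm : x < m) :
    (∑ i ∈ Finset.range (2 * m + c),
        ⌈((((2 ^ m - 2 ^ x - 2 ^ y) * 2 ^ (m + c - 1) : ℕ) : ℚ) + 1) / 2 ^ i⌉ =
      ((((2 ^ m - 2 ^ x) * (2 ^ m - 2 ^ y) * 2 ^ c : ℕ) : ℤ)
        - 2 ^ (x + y + c) + m + c + y + 1)) ∧
    ((∑ i ∈ Finset.range (2 * m + c),
        ⌈((((2 ^ m - 2 ^ x - 2 ^ y) * 2 ^ (m + c - 1) : ℕ) : ℚ) + 1) / 2 ^ i⌉ ≥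
       (((2 ^ m - 2 ^ x) * (2 ^ m - 2 ^ y) * 2 ^ c : ℕ) : ℤ) + 1) ↔
      2 ^ (x + y + c) ≤ m + c + y) := by
  have hm : 1 ≤ m := by omega
  set A : ℕ := 2 ^ m - 2 ^ x - 2 ^ y with hA
  set d : ℕ := A * 2 ^ (m + c - 1) with hd
  have h1 : (∑ i ∈ Finset.range (2 * m + c), ⌈((d : ℚ) + 1) / 2 ^ i⌉ =
      ((((2 ^ m - 2 ^ x) * (2 ^ m - 2 ^ y) * 2 ^ c : ℕ) : ℤ)
        - 2 ^ (x + y + c) + m + c + y + 1)) := by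
    rw [Finset.sum_congr rfl (fun i _ => griesmer_ceil d i), Finset.sum_add_distrib,
      Finset.sum_const, Finset.card_range]
    rw [← Finset.sum_range_add_sum_Ico (fun i => ((d / 2 ^ i : ℕ) : ℤ)) (by omega : m + c ≤ 2 * m + c)]
    have partA : (∑ i ∈ Finset.range (m + c), ((d / 2 ^ i : ℕ) : ℤ))
        = (A : ℤ) * (2 ^ (m + c) - 2 ^ 0) := by
      have hterm : ∀ i ∈ Finset.range (m + c), ((d / 2 ^ i : ℕ) : ℤ)
          = (A : ℤ) * 2 ^ ((m + c) - 1 - i) := by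
        intro i hi
        simp only [Finset.mem_range] at hi
        have e : (2:ℕ) ^ (m + c - 1) = 2 ^ ((m + c) - 1 - i) * 2 ^ i := by
          rw [← pow_add]; congr 1; omega
        rw [hd, e, ← mul_assoc, Nat.mul_div_cancel _ (by positivity)]
        push_cast
        ring
      rw [Finset.sum_congr rfl hterm, ← Finset.mul_sum,
        griesmer_geo (m + c) (m + c) le_rfl, Nat.sub_self]
    have partB : (∑ i ∈ Finset.Ico (m + c) (2 * m + c), ((d / 2 ^ i : ℕ) : ℤ))
        = (A : ℤ) + y + 1 - m := by
      have hterm : ∀ i ∈ Finset.Ico (m + c) (2 * m + c), ((d / 2 ^ i : ℕ) : ℤ)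
          = ((A / 2 ^ (i - (m + c - 1)) : ℕ) : ℤ) := by
        intro i hi
        simp only [Finset.mem_Ico] at hi
        have e : (2:ℕ) ^ i = 2 ^ (m + c - 1) * 2 ^ (i - (m + c - 1)) := by
          rw [← pow_add]; congr 1; omega
        rw [hd, e, ← Nat.div_div_eq_div_mul, Nat.mul_div_cancel _ (by positivity)]
      rw [Finset.sum_congr rfl hterm, Finset.sum_Ico_eq_sum_range]
      have e2 : ∀ i ∈ Finset.range (2 * m + c - (m + c)),
          ((A / 2 ^ (m + c + i - (m + c - 1)) : ℕ) : ℤ) = ((A / 2 ^ (i + 1) : ℕ) : ℤ) := by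
        intro i hi
        have e : m + c + i - (m + c - 1) = i + 1 := by omega
        rw [e]
      rw [Finset.sum_congr rfl e2]
      have e3 : 2 * m + c - (m + c) = m := by omega
      rw [e3, hA, griesmer_T m x y hyx hxm]
    rw [partA, partB, hA, gcast3 m x y hxm hyx.le]
    have hxm' : (2:ℕ) ^ x ≤ 2 ^ m := Nat.pow_le_pow_right (by norm_num) hxm.le
    have hym' : (2:ℕ) ^ y ≤ 2 ^ m := Nat.pow_le_pow_right (by norm_num) (by omega)
    rw [Nat.cast_mul, Nat.cast_mul, Nat.cast_sub hxm', Nat.cast_sub hym']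
    push_cast
    ring
  refine ⟨h1, ?_⟩
  rw [ge_iff_le, h1]
  have hc2 : ((2:ℤ) ^ (x + y + c)) = ((2 ^ (x + y + c) : ℕ) : ℤ) := by push_cast; ring
  rw [hc2]
  generalize ((2 ^ (x + y + c) : ℕ)) = t
  generalize (((2 ^ m - 2 ^ x) * (2 ^ m - 2 ^ y) * 2 ^ c : ℕ) : ℤ) = N
  omega
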